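/- Let H be a complex Hilbert space and F : H → H a bounded self-adjoint linear operator. Suppose there exist a bounded linear operator G : H → H and a bounded self-adjoint linear operator P : H → H such that G F + P = 1, F G + P = 1 and F P = 0. Then the range of F is closed and H is the internal orthogonal direct sum of ker(F) and range(F). -/

import Mathlib

open scoped ComplexInnerProductSpace

/-- If a bounded self-adjoint operator `F` on a complex Hilbert space possesses a
self-adjoint parametrix (`G F + P = 1`, `F G + P = 1`, `F P = 0` with `P` self-adjoint),
then `F` has closed range and `H` is the internal orthogonal direct sum of `ker F` and
`range F`. -/
theorem stmt7 (H : Type*) [NormedAddCommGroup H] [InnerProductSpace ℂ H]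
    [CompleteSpace H]
    (F : H →L[ℂ] H) (hF : IsSelfAdjoint F)
    (G P : H →L[ℂ] H) (hP : IsSelfAdjoint P)
    (h1 : G * F + P = 1) (h2 : F * G + P = 1) (h3 : F * P = 0) :
    IsClosed (Set.range F) ∧
      (∀ x ∈ LinearMap.ker (F : H →ₗ[ℂ] H), ∀ y ∈ LinearMap.range (F : H →ₗ[ℂ] H), ⟪x, y⟫ = 0) ∧
      (∀ u : H, ∃ x ∈ LinearMap.ker (F : H →ₗ[ℂ] H), ∃ y ∈ LinearMap.range (F : H →ₗ[ℂ] H), u = x + y) := by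
  have hPF : P * F = 0 := by
    have := congrArg star h3
    rwa [star_mul, hF.star_eq, hP.star_eq, star_zero] at this
  have hrange : Set.range F = (LinearMap.ker (P : H →ₗ[ℂ] H) : Set H) := by
    ext u
    constructor
    · rintro ⟨z, rfl⟩
      have : (P * F) z = 0 := by rw [hPF]; rfl
      simpa using this
    · intro hu
      have hu' : P u = 0 := hu
      have : (F * G) u + P u = u := by
        have := congrArg (fun T : H →L[ℂ] H => T u) h2
        simpa using this
      rw [hu', add_zero] at this
      exact ⟨G u, this⟩
  refine ⟨?_, ?_, ?_⟩
  · rw [hrange]; exact ContinuousLinearMap.isClosed_ker P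
  · intro x hx y hy
    obtain ⟨z, rfl⟩ := hy
    have hx' : F x = 0 := hx
    calc ⟪x, F z⟫ = ⟪F x, z⟫ := (hF.isSymmetric x z).symm
    _ = 0 := by rw [hx']; simp
  · intro u
    have hdec : F (G u) + P u = u := by
      have := congrArg (fun T : H →L[ℂ] H => T u) h2
      simpa using this
    refine ⟨P u, ?_, F (G u), ⟨G u, rfl⟩, ?_⟩
    · have : (F * P) u = 0 := by rw [h3]; rfl
      simpa using this
    · rw [add_comm] at hdec; exact hdec.symm
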